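/- Define ska(π) as the number of indices i ∈ {1,...,n} such that d_i > max(d_1,...,d_{i-1}, 0), where d_i = i - j_i in the Fisher–Yates encoding of π (i.e., the number of strict left-to-right records exceeding 0 in the sequence d). Then ska(id) = 0, ska(π_1) = n - 1 for the n-cycle π_1 = 2 3 ... n 1, and ska(π_0) = ⌈(n-1)/2⌉ for the reversal π_0(i) = n+1-i. -/

import Mathlib

/-- The Fisher–Yates map: a sequence `j` with `j i ≤ i` maps to the product of
transpositions `(1 j_1)(2 j_2)⋯(n j_n)` applied left to right. -/
def FY (n : ℕ) (j : ∀ i : Fin n, Fin (i.val + 1)) : Equiv.Perm (Fin n) :=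
  (List.ofFn fun i : Fin n => Equiv.swap i (Fin.castLE i.isLt (j i))).reverse.prod

/-- The Fisher–Yates encoding of a permutation: the (unique) preimage under `FY`. -/
noncomputable def FYcode (n : ℕ) (π : Equiv.Perm (Fin n)) : ∀ i : Fin n, Fin (i.val + 1) :=
  Function.invFun (FY n) π

/-- The statistic `stat π = ∑ i (i - j_i)` in the Fisher–Yates encoding. -/
noncomputable def statFY (n : ℕ) (π : Equiv.Perm (Fin n)) : ℕ :=
  ∑ i : Fin n, (i.val - (FYcode n π i).val)

/-- Skandera's Eulerian partner: the number of strict left-to-right records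
exceeding 0 in the sequence `d_i = i - j_i` of the Fisher–Yates encoding. -/
noncomputable def skaFY (n : ℕ) (π : Equiv.Perm (Fin n)) : ℕ :=
  {i : Fin n | 0 < i.val - (FYcode n π i).val ∧
    ∀ k : Fin n, k < i →
      k.val - (FYcode n π k).val < i.val - (FYcode n π i).val}.ncard

namespace SkaAux

def Qgen {M : Type*} [Monoid M] (f : ℕ → M) : ℕ → M
  | 0 => 1
  | m + 1 => f m * Qgen f m

lemma ofFn_reverse_prod {M : Type*} [Monoid M] (f : ℕ → M) (m : ℕ) :
    (List.ofFn (fun i : Fin m => f i.val)).reverse.prod = Qgen f m := by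
  induction m with
  | zero => simp [Qgen]
  | succ m ih =>
    rw [List.ofFn_succ']
    simp only [List.concat_eq_append, List.reverse_append, List.reverse_cons,
      List.reverse_nil, List.nil_append, List.singleton_append, List.prod_cons, Qgen]
    rw [← ih]
    rfl

variable {n : ℕ}

/-- the swap sequence extended to all of ℕ -/
def g (j : ∀ i : Fin n, Fin (i.val + 1)) (m : ℕ) : Equiv.Perm (Fin n) :=
  if h : m < n then Equiv.swap ⟨m, h⟩ (Fin.castLE h (j ⟨m, h⟩)) else 1

lemma FY_eq_Q (j : ∀ i : Fin n, Fin (i.val + 1)) : FY n j = Qgen (g j) n := by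
  rw [FY, ← ofFn_reverse_prod]
  have : (fun i : Fin n => Equiv.swap i (Fin.castLE i.isLt (j i)))
      = fun i : Fin n => g j i.val := by
    funext i
    simp only [g, i.isLt, dif_pos]
  rw [this]

lemma g_val_le (j : ∀ i : Fin n, Fin (i.val + 1)) (m : ℕ) (x : Fin n)
    (hx : m < x.val) : g j m x = x := by
  rw [g]
  split
  · apply Equiv.swap_apply_of_ne_of_ne
    · intro h
      subst h
      simp at hx
    · intro h
      have h2 := (j ⟨m, ‹m < n›⟩).isLt
      subst h
      simp only [Fin.coe_castLE] at hx
      simp only [] at h2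
      omega
  · rfl

lemma Q_fix (j : ∀ i : Fin n, Fin (i.val + 1)) (m : ℕ) (x : Fin n)
    (hx : m ≤ x.val) : Qgen (g j) m x = x := by
  induction m with
  | zero => rfl
  | succ m ih =>
    simp only [Qgen, Equiv.Perm.mul_apply]
    rw [ih (by omega), g_val_le j m x (by omega)]

lemma Q_top (j : ∀ i : Fin n, Fin (i.val + 1)) (m : ℕ) (h : m < n) :
    Qgen (g j) (m + 1) ⟨m, h⟩ = Fin.castLE h (j ⟨m, h⟩) := by
  simp only [Qgen, Equiv.Perm.mul_apply]
  rw [Q_fix j m ⟨m, h⟩ le_rfl, g, dif_pos h, Equiv.swap_apply_left]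

lemma FY_injective : Function.Injective (FY n) := by
  intro j j' hjj
  have key : ∀ m : ℕ, Qgen (g j) m = Qgen (g j') m → ∀ i : Fin n, i.val < m → j i = j' i := by
    intro m
    induction m with
    | zero => intro _ i hi; omega
    | succ m ih =>
      intro hQ i hi
      have hmn : ∀ hm : m < n, j ⟨m, hm⟩ = j' ⟨m, hm⟩ := by
        intro hm
        have := congrArg (fun σ : Equiv.Perm (Fin n) => σ ⟨m, hm⟩) hQ
        rw [Q_top j m hm, Q_top j' m hm] at this
        exact Fin.castLE_injective _ this
      have hg : g j m = g j' m := by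
        rw [g, g]
        split
        · rw [hmn ‹m < n›]
        · rfl
      have hQm : Qgen (g j) m = Qgen (g j') m := by
        have : (g j m)⁻¹ * Qgen (g j) (m+1) = (g j' m)⁻¹ * Qgen (g j') (m+1) := by
          rw [hQ, hg]
        simpa only [Qgen, inv_mul_cancel_left] using this
      rcases Nat.lt_or_ge i.val m with h' | h'
      · exact ih hQm i h'
      · have : i.val = m := by omega
        have hm : m < n := this ▸ i.isLt
        have : i = ⟨m, hm⟩ := Fin.ext this
        subst this
        exact hmn hm
  funext i
  exact key n (by rw [← FY_eq_Q, ← FY_eq_Q, hjj]) i i.isLt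

lemma FYcode_FY (j : ∀ i : Fin n, Fin (i.val + 1)) : FYcode n (FY n j) = j :=
  Function.leftInverse_invFun FY_injective j

def jid (i : Fin n) : Fin (i.val + 1) := ⟨i.val, Nat.lt_succ_self _⟩

def jrot (i : Fin n) : Fin (i.val + 1) := ⟨0, Nat.succ_pos _⟩

def jrev (i : Fin n) : Fin (i.val + 1) :=
  if h : 2 * i.val < n then ⟨i.val, Nat.lt_succ_self _⟩
  else ⟨n - 1 - i.val, by have := i.isLt; omega⟩

lemma swap_val (a b y : Fin n) :
    (Equiv.swap a b y).val =
      if y.val = a.val then b.val else if y.val = b.val then a.val else y.val := by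
  rw [Equiv.swap_apply_def]
  split_ifs <;> simp_all [Fin.ext_iff]

lemma Q_id (m : ℕ) (x : Fin n) : Qgen (g jid) m x = x := by
  induction m with
  | zero => rfl
  | succ m ih =>
    simp only [Qgen, Equiv.Perm.mul_apply, ih]
    rw [g]
    split
    · have : Fin.castLE ‹m < n› (jid ⟨m, ‹m < n›⟩) = ⟨m, ‹m < n›⟩ := rfl
      rw [this, Equiv.swap_self]
      rfl
    · rfl

lemma Q_rot (m : ℕ) (hm : m ≤ n) (x : Fin n) :
    (Qgen (g jrot) m x).val =
      if x.val + 1 < m then x.val + 1 else if x.val + 1 = m then 0 else x.val := by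
  induction m with
  | zero => simp [Qgen]
  | succ m ih =>
    have hmn : m < n := by omega
    have ihv := ih (by omega)
    simp only [Qgen, Equiv.Perm.mul_apply]
    rw [g, dif_pos hmn]
    have hc : Fin.castLE hmn (jrot ⟨m, hmn⟩) = ⟨0, by omega⟩ := rfl
    rw [hc, swap_val]
    simp only [Fin.val_mk] at ihv ⊢
    rcases Nat.lt_trichotomy (x.val + 1) m with h | h | h
    · rw [if_pos h] at ihv
      rw [ihv]
      split_ifs <;> ((try contradiction) <;> omega)
    · rw [if_neg (by omega), if_pos h] at ihv
      rw [ihv]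
      split_ifs <;> ((try contradiction) <;> omega)
    · rw [if_neg (by omega), if_neg (by omega)] at ihv
      rw [ihv]
      split_ifs <;> ((try contradiction) <;> omega)

lemma g_rev_apply (m : ℕ) (hm : m < n) (y : Fin n) :
    (g jrev m y).val = if 2 * m < n then y.val
      else if y.val = m then n - 1 - m
      else if y.val = n - 1 - m then m else y.val := by
  rw [g, dif_pos hm]
  by_cases h2 : 2 * m < n
  · have : Fin.castLE hm (jrev ⟨m, hm⟩) = ⟨m, hm⟩ := by
      simp only [jrev]
      rw [dif_pos h2]
      rfl
    rw [this, Equiv.swap_self, if_pos h2]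
    rfl
  · have : Fin.castLE hm (jrev ⟨m, hm⟩) = ⟨n - 1 - m, by omega⟩ := by
      simp only [jrev]
      rw [dif_neg h2]
      rfl
    rw [this, swap_val, if_neg h2]

lemma Q_rev (m : ℕ) (hm : m ≤ n) (x : Fin n) :
    (Qgen (g jrev) m x).val =
      if n ≤ x.val + m ∧ x.val < m then n - 1 - x.val else x.val := by
  induction m with
  | zero => simp [Qgen]
  | succ m ih =>
    have hmn : m < n := by omega
    have ihv := ih (by omega)
    have hx := x.isLt
    simp only [Qgen, Equiv.Perm.mul_apply]
    rw [g_rev_apply m hmn, ihv]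
    split_ifs <;> ((try contradiction) <;> omega)

lemma FY_id : FY n jid = 1 := by
  rw [FY_eq_Q]
  ext x
  rw [Q_id]
  rfl

lemma FY_rot : FY n jrot = finRotate n := by
  cases n with
  | zero => apply Subsingleton.elim
  | succ N =>
    rw [FY_eq_Q]
    ext x
    have hx := x.isLt
    rw [Q_rot _ le_rfl, finRotate_succ_apply, Fin.val_add_one]
    by_cases hl : x = Fin.last N
    · rw [if_pos hl]
      subst hl
      simp [Fin.val_last]
    · rw [if_neg hl]
      have : x.val ≠ N := fun h => hl (Fin.ext h)
      rw [if_pos (by omega)]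

lemma FY_rev : FY n jrev = Fin.revPerm := by
  rw [FY_eq_Q]
  ext x
  have hx := x.isLt
  rw [Q_rev n le_rfl, if_pos ⟨by omega, hx⟩]
  simp only [Fin.revPerm_apply, Fin.val_rev]
  omega

lemma ncard_le_set (c : ℕ) : {i : Fin n | c ≤ i.val}.ncard = n - c := by
  by_cases h : c < n
  · have : {i : Fin n | c ≤ i.val} = ↑(Finset.Ici (⟨c, h⟩ : Fin n)) := by
      ext i
      simp [Fin.le_def]
    rw [this, Set.ncard_coe_finset, Fin.card_Ici]
  · have : {i : Fin n | c ≤ i.val} = ∅ := by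
      ext i
      have := i.isLt
      simp only [Set.mem_setOf_eq, Set.mem_empty_iff_false, iff_false]
      omega
    rw [this, Set.ncard_empty]
    omega

end SkaAux

open SkaAux in
/-- `ska(id) = 0`, `ska(π₁) = n - 1` for the n-cycle
`π₁ = 2 3 … n 1`, and `ska(π₀) = ⌈(n-1)/2⌉` for the reversal `π₀`. -/
theorem skaFY_values (n : ℕ) :
    skaFY n 1 = 0 ∧
    skaFY n (finRotate n) = n - 1 ∧
    skaFY n (Fin.revPerm : Equiv.Perm (Fin n)) = (n - 1 + 1) / 2 := by
  refine ⟨?_, ?_, ?_⟩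
  · have h1 : FYcode n 1 = jid := by rw [← FY_id]; exact FYcode_FY jid
    rw [skaFY, h1]
    have : {i : Fin n | 0 < i.val - (jid i).val ∧
        ∀ k : Fin n, k < i → k.val - (jid k).val < i.val - (jid i).val} = ∅ := by
      ext i
      simp [jid]
    rw [this, Set.ncard_empty]
  · have h1 : FYcode n (finRotate n) = jrot := by rw [← FY_rot]; exact FYcode_FY jrot
    rw [skaFY, h1]
    have : {i : Fin n | 0 < i.val - (jrot i).val ∧
        ∀ k : Fin n, k < i → k.val - (jrot k).val < i.val - (jrot i).val}
        = {i : Fin n | 1 ≤ i.val} := by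
      ext i
      simp only [Set.mem_setOf_eq, jrot, Fin.val_mk, Nat.sub_zero]
      constructor
      · rintro ⟨h, -⟩; omega
      · intro h
        refine ⟨by omega, fun k hk => ?_⟩
        rw [Fin.lt_def] at hk
        omega
    rw [this, ncard_le_set]
  · have h1 : FYcode n Fin.revPerm = jrev := by rw [← FY_rev]; exact FYcode_FY jrev
    rw [skaFY, h1]
    have hd : ∀ i : Fin n, i.val - (jrev i).val
        = if 2 * i.val < n then 0 else i.val - (n - 1 - i.val) := by
      intro i
      rw [jrev]
      split_ifs with h
      · simp
      · rfl
    have : {i : Fin n | 0 < i.val - (jrev i).val ∧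
        ∀ k : Fin n, k < i → k.val - (jrev k).val < i.val - (jrev i).val}
        = {i : Fin n | (n + 1) / 2 ≤ i.val} := by
      ext i
      have hi := i.isLt
      simp only [Set.mem_setOf_eq, hd]
      constructor
      · rintro ⟨hpos, -⟩
        by_cases h : 2 * i.val < n
        · rw [if_pos h] at hpos; omega
        · omega
      · intro h
        have hni : ¬ 2 * i.val < n := by omega
        refine ⟨by rw [if_neg hni]; omega, fun k hk => ?_⟩
        rw [Fin.lt_def] at hk
        have hk2 := k.isLt
        rw [if_neg hni]
        split_ifs with h2
        · omega
        · omega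
    rw [this, ncard_le_set]
    omega
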